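/- Let 14 ≤ N ≤ 20. If Q satisfies the Hofstadter Q-recurrence with initial condition Q(i) = i for 1 ≤ i ≤ N, then Q(N+29) = 27, Q(N+30) = 24, Q(N+31) = 12, Q(N+32) = 2N+19, and the sequence dies at index N+33 since N+33 - Q(N+32) ≤ 0. -/

import Mathlib

set_option maxHeartbeats 1000000 in
/-- For 14 ≤ N ≤ 20, Q(N+29)=27, Q(N+30)=24, Q(N+31)=12,
Q(N+32)=2N+19, and the sequence dies at index N+33. -/
theorem stmt_4 (N : ℤ) (hN1 : 14 ≤ N) (hN2 : N ≤ 20) (Q : ℤ → ℤ)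
    (hinit : ∀ i : ℤ, 1 ≤ i → i ≤ N → Q i = i)
    (hrec : ∀ n : ℤ, N < n → 1 ≤ n - Q (n - 1) → 1 ≤ n - Q (n - 2) →
      Q n = Q (n - Q (n - 1)) + Q (n - Q (n - 2))) :
    Q (N + 29) = 27 ∧ Q (N + 30) = 24 ∧ Q (N + 31) = 12 ∧
      Q (N + 32) = 2 * N + 19 ∧ (N + 33) - Q (N + 32) ≤ 0 := by
  have h1 : Q (N + 1) = 3 := by
    have p1 : Q (N + 1 - 1) = N + 1 - 1 := hinit _ (by linarith) (by linarith)
    have p2 : Q (N + 1 - 2) = N + 1 - 2 := hinit _ (by linarith) (by linarith)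
    have e := hrec (N + 1) (by linarith) (by rw [p1]; linarith) (by rw [p2]; linarith)
    rw [p1, p2] at e
    rw [show (N:ℤ) + 1 - (N + 1 - 1) = 1 by ring] at e
    rw [show (N:ℤ) + 1 - (N + 1 - 2) = 2 by ring] at e
    have q1 : Q (1) = 1 := hinit 1 (by norm_num) (by linarith)
    have q2 : Q (2) = 2 := hinit 2 (by norm_num) (by linarith)
    rw [q1] at e
    rw [q2] at e
    linarith
  have h2 : Q (N + 2) = N + 1 := by
    have p1 : Q (N + 2 - 1) = 3 := by rw [show (N:ℤ) + 2 - 1 = N + 1 by ring]; exact h1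
    have p2 : Q (N + 2 - 2) = N + 2 - 2 := hinit _ (by linarith) (by linarith)
    have e := hrec (N + 2) (by linarith) (by rw [p1]; linarith) (by rw [p2]; linarith)
    rw [p1, p2] at e
    rw [show (N:ℤ) + 2 - (3) = N - 1 by ring] at e
    rw [show (N:ℤ) + 2 - (N + 2 - 2) = 2 by ring] at e
    have q1 : Q (N - 1) = N - 1 := hinit _ (by linarith) (by linarith)
    have q2 : Q (2) = 2 := hinit 2 (by norm_num) (by linarith)
    rw [q1] at e
    rw [q2] at e
    linarith
  have h3 : Q (N + 3) = N + 2 := by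
    have p1 : Q (N + 3 - 1) = N + 1 := by rw [show (N:ℤ) + 3 - 1 = N + 2 by ring]; exact h2
    have p2 : Q (N + 3 - 2) = 3 := by rw [show (N:ℤ) + 3 - 2 = N + 1 by ring]; exact h1
    have e := hrec (N + 3) (by linarith) (by rw [p1]; linarith) (by rw [p2]; linarith)
    rw [p1, p2] at e
    rw [show (N:ℤ) + 3 - (N + 1) = 2 by ring] at e
    rw [show (N:ℤ) + 3 - (3) = N by ring] at e
    have q1 : Q (2) = 2 := hinit 2 (by norm_num) (by linarith)
    have q2 : Q (N) = N := hinit _ (by linarith) (by linarith)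
    rw [q1] at e
    rw [q2] at e
    linarith
  have h4 : Q (N + 4) = 5 := by
    have p1 : Q (N + 4 - 1) = N + 2 := by rw [show (N:ℤ) + 4 - 1 = N + 3 by ring]; exact h3
    have p2 : Q (N + 4 - 2) = N + 1 := by rw [show (N:ℤ) + 4 - 2 = N + 2 by ring]; exact h2
    have e := hrec (N + 4) (by linarith) (by rw [p1]; linarith) (by rw [p2]; linarith)
    rw [p1, p2] at e
    rw [show (N:ℤ) + 4 - (N + 2) = 2 by ring] at e
    rw [show (N:ℤ) + 4 - (N + 1) = 3 by ring] at e
    have q1 : Q (2) = 2 := hinit 2 (by norm_num) (by linarith)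
    have q2 : Q (3) = 3 := hinit 3 (by norm_num) (by linarith)
    rw [q1] at e
    rw [q2] at e
    linarith
  have h5 : Q (N + 5) = N + 3 := by
    have p1 : Q (N + 5 - 1) = 5 := by rw [show (N:ℤ) + 5 - 1 = N + 4 by ring]; exact h4
    have p2 : Q (N + 5 - 2) = N + 2 := by rw [show (N:ℤ) + 5 - 2 = N + 3 by ring]; exact h3
    have e := hrec (N + 5) (by linarith) (by rw [p1]; linarith) (by rw [p2]; linarith)
    rw [p1, p2] at e
    rw [show (N:ℤ) + 5 - (5) = N by ring] at e
    rw [show (N:ℤ) + 5 - (N + 2) = 3 by ring] at e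
    have q1 : Q (N) = N := hinit _ (by linarith) (by linarith)
    have q2 : Q (3) = 3 := hinit 3 (by norm_num) (by linarith)
    rw [q1] at e
    rw [q2] at e
    linarith
  have h6 : Q (N + 6) = 6 := by
    have p1 : Q (N + 6 - 1) = N + 3 := by rw [show (N:ℤ) + 6 - 1 = N + 5 by ring]; exact h5
    have p2 : Q (N + 6 - 2) = 5 := by rw [show (N:ℤ) + 6 - 2 = N + 4 by ring]; exact h4
    have e := hrec (N + 6) (by linarith) (by rw [p1]; linarith) (by rw [p2]; linarith)
    rw [p1, p2] at e
    rw [show (N:ℤ) + 6 - (N + 3) = 3 by ring] at e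
    rw [show (N:ℤ) + 6 - (5) = N + 1 by ring] at e
    have q1 : Q (3) = 3 := hinit 3 (by norm_num) (by linarith)
    have q2 : Q (N + 1) = 3 := h1
    rw [q1] at e
    rw [q2] at e
    linarith
  have h7 : Q (N + 7) = 7 := by
    have p1 : Q (N + 7 - 1) = 6 := by rw [show (N:ℤ) + 7 - 1 = N + 6 by ring]; exact h6
    have p2 : Q (N + 7 - 2) = N + 3 := by rw [show (N:ℤ) + 7 - 2 = N + 5 by ring]; exact h5
    have e := hrec (N + 7) (by linarith) (by rw [p1]; linarith) (by rw [p2]; linarith)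
    rw [p1, p2] at e
    rw [show (N:ℤ) + 7 - (6) = N + 1 by ring] at e
    rw [show (N:ℤ) + 7 - (N + 3) = 4 by ring] at e
    have q1 : Q (N + 1) = 3 := h1
    have q2 : Q (4) = 4 := hinit 4 (by norm_num) (by linarith)
    rw [q1] at e
    rw [q2] at e
    linarith
  have h8 : Q (N + 8) = N + 4 := by
    have p1 : Q (N + 8 - 1) = 7 := by rw [show (N:ℤ) + 8 - 1 = N + 7 by ring]; exact h7
    have p2 : Q (N + 8 - 2) = 6 := by rw [show (N:ℤ) + 8 - 2 = N + 6 by ring]; exact h6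
    have e := hrec (N + 8) (by linarith) (by rw [p1]; linarith) (by rw [p2]; linarith)
    rw [p1, p2] at e
    rw [show (N:ℤ) + 8 - (7) = N + 1 by ring] at e
    rw [show (N:ℤ) + 8 - (6) = N + 2 by ring] at e
    have q1 : Q (N + 1) = 3 := h1
    have q2 : Q (N + 2) = N + 1 := h2
    rw [q1] at e
    rw [q2] at e
    linarith
  have h9 : Q (N + 9) = N + 6 := by
    have p1 : Q (N + 9 - 1) = N + 4 := by rw [show (N:ℤ) + 9 - 1 = N + 8 by ring]; exact h8
    have p2 : Q (N + 9 - 2) = 7 := by rw [show (N:ℤ) + 9 - 2 = N + 7 by ring]; exact h7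
    have e := hrec (N + 9) (by linarith) (by rw [p1]; linarith) (by rw [p2]; linarith)
    rw [p1, p2] at e
    rw [show (N:ℤ) + 9 - (N + 4) = 5 by ring] at e
    rw [show (N:ℤ) + 9 - (7) = N + 2 by ring] at e
    have q1 : Q (5) = 5 := hinit 5 (by norm_num) (by linarith)
    have q2 : Q (N + 2) = N + 1 := h2
    rw [q1] at e
    rw [q2] at e
    linarith
  have h10 : Q (N + 10) = 10 := by
    have p1 : Q (N + 10 - 1) = N + 6 := by rw [show (N:ℤ) + 10 - 1 = N + 9 by ring]; exact h9
    have p2 : Q (N + 10 - 2) = N + 4 := by rw [show (N:ℤ) + 10 - 2 = N + 8 by ring]; exact h8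
    have e := hrec (N + 10) (by linarith) (by rw [p1]; linarith) (by rw [p2]; linarith)
    rw [p1, p2] at e
    rw [show (N:ℤ) + 10 - (N + 6) = 4 by ring] at e
    rw [show (N:ℤ) + 10 - (N + 4) = 6 by ring] at e
    have q1 : Q (4) = 4 := hinit 4 (by norm_num) (by linarith)
    have q2 : Q (6) = 6 := hinit 6 (by norm_num) (by linarith)
    rw [q1] at e
    rw [q2] at e
    linarith
  have h11 : Q (N + 11) = 8 := by
    have p1 : Q (N + 11 - 1) = 10 := by rw [show (N:ℤ) + 11 - 1 = N + 10 by ring]; exact h10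
    have p2 : Q (N + 11 - 2) = N + 6 := by rw [show (N:ℤ) + 11 - 2 = N + 9 by ring]; exact h9
    have e := hrec (N + 11) (by linarith) (by rw [p1]; linarith) (by rw [p2]; linarith)
    rw [p1, p2] at e
    rw [show (N:ℤ) + 11 - (10) = N + 1 by ring] at e
    rw [show (N:ℤ) + 11 - (N + 6) = 5 by ring] at e
    have q1 : Q (N + 1) = 3 := h1
    have q2 : Q (5) = 5 := hinit 5 (by norm_num) (by linarith)
    rw [q1] at e
    rw [q2] at e
    linarith
  have h12 : Q (N + 12) = N + 6 := by
    have p1 : Q (N + 12 - 1) = 8 := by rw [show (N:ℤ) + 12 - 1 = N + 11 by ring]; exact h11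
    have p2 : Q (N + 12 - 2) = 10 := by rw [show (N:ℤ) + 12 - 2 = N + 10 by ring]; exact h10
    have e := hrec (N + 12) (by linarith) (by rw [p1]; linarith) (by rw [p2]; linarith)
    rw [p1, p2] at e
    rw [show (N:ℤ) + 12 - (8) = N + 4 by ring] at e
    rw [show (N:ℤ) + 12 - (10) = N + 2 by ring] at e
    have q1 : Q (N + 4) = 5 := h4
    have q2 : Q (N + 2) = N + 1 := h2
    rw [q1] at e
    rw [q2] at e
    linarith
  have h13 : Q (N + 13) = N + 10 := by
    have p1 : Q (N + 13 - 1) = N + 6 := by rw [show (N:ℤ) + 13 - 1 = N + 12 by ring]; exact h12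
    have p2 : Q (N + 13 - 2) = 8 := by rw [show (N:ℤ) + 13 - 2 = N + 11 by ring]; exact h11
    have e := hrec (N + 13) (by linarith) (by rw [p1]; linarith) (by rw [p2]; linarith)
    rw [p1, p2] at e
    rw [show (N:ℤ) + 13 - (N + 6) = 7 by ring] at e
    rw [show (N:ℤ) + 13 - (8) = N + 5 by ring] at e
    have q1 : Q (7) = 7 := hinit 7 (by norm_num) (by linarith)
    have q2 : Q (N + 5) = N + 3 := h5
    rw [q1] at e
    rw [q2] at e
    linarith
  have h14 : Q (N + 14) = 12 := by
    have p1 : Q (N + 14 - 1) = N + 10 := by rw [show (N:ℤ) + 14 - 1 = N + 13 by ring]; exact h13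
    have p2 : Q (N + 14 - 2) = N + 6 := by rw [show (N:ℤ) + 14 - 2 = N + 12 by ring]; exact h12
    have e := hrec (N + 14) (by linarith) (by rw [p1]; linarith) (by rw [p2]; linarith)
    rw [p1, p2] at e
    rw [show (N:ℤ) + 14 - (N + 10) = 4 by ring] at e
    rw [show (N:ℤ) + 14 - (N + 6) = 8 by ring] at e
    have q1 : Q (4) = 4 := hinit 4 (by norm_num) (by linarith)
    have q2 : Q (8) = 8 := hinit 8 (by norm_num) (by linarith)
    rw [q1] at e
    rw [q2] at e
    linarith
  have h15 : Q (N + 15) = N + 7 := by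
    have p1 : Q (N + 15 - 1) = 12 := by rw [show (N:ℤ) + 15 - 1 = N + 14 by ring]; exact h14
    have p2 : Q (N + 15 - 2) = N + 10 := by rw [show (N:ℤ) + 15 - 2 = N + 13 by ring]; exact h13
    have e := hrec (N + 15) (by linarith) (by rw [p1]; linarith) (by rw [p2]; linarith)
    rw [p1, p2] at e
    rw [show (N:ℤ) + 15 - (12) = N + 3 by ring] at e
    rw [show (N:ℤ) + 15 - (N + 10) = 5 by ring] at e
    have q1 : Q (N + 3) = N + 2 := h3
    have q2 : Q (5) = 5 := hinit 5 (by norm_num) (by linarith)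
    rw [q1] at e
    rw [q2] at e
    linarith
  have h16 : Q (N + 16) = 14 := by
    have p1 : Q (N + 16 - 1) = N + 7 := by rw [show (N:ℤ) + 16 - 1 = N + 15 by ring]; exact h15
    have p2 : Q (N + 16 - 2) = 12 := by rw [show (N:ℤ) + 16 - 2 = N + 14 by ring]; exact h14
    have e := hrec (N + 16) (by linarith) (by rw [p1]; linarith) (by rw [p2]; linarith)
    rw [p1, p2] at e
    rw [show (N:ℤ) + 16 - (N + 7) = 9 by ring] at e
    rw [show (N:ℤ) + 16 - (12) = N + 4 by ring] at e
    have q1 : Q (9) = 9 := hinit 9 (by norm_num) (by linarith)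
    have q2 : Q (N + 4) = 5 := h4
    rw [q1] at e
    rw [q2] at e
    linarith
  have h17 : Q (N + 17) = N + 12 := by
    have p1 : Q (N + 17 - 1) = 14 := by rw [show (N:ℤ) + 17 - 1 = N + 16 by ring]; exact h16
    have p2 : Q (N + 17 - 2) = N + 7 := by rw [show (N:ℤ) + 17 - 2 = N + 15 by ring]; exact h15
    have e := hrec (N + 17) (by linarith) (by rw [p1]; linarith) (by rw [p2]; linarith)
    rw [p1, p2] at e
    rw [show (N:ℤ) + 17 - (14) = N + 3 by ring] at e
    rw [show (N:ℤ) + 17 - (N + 7) = 10 by ring] at e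
    have q1 : Q (N + 3) = N + 2 := h3
    have q2 : Q (10) = 10 := hinit 10 (by norm_num) (by linarith)
    rw [q1] at e
    rw [q2] at e
    linarith
  have h18 : Q (N + 18) = 11 := by
    have p1 : Q (N + 18 - 1) = N + 12 := by rw [show (N:ℤ) + 18 - 1 = N + 17 by ring]; exact h17
    have p2 : Q (N + 18 - 2) = 14 := by rw [show (N:ℤ) + 18 - 2 = N + 16 by ring]; exact h16
    have e := hrec (N + 18) (by linarith) (by rw [p1]; linarith) (by rw [p2]; linarith)
    rw [p1, p2] at e
    rw [show (N:ℤ) + 18 - (N + 12) = 6 by ring] at e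
    rw [show (N:ℤ) + 18 - (14) = N + 4 by ring] at e
    have q1 : Q (6) = 6 := hinit 6 (by norm_num) (by linarith)
    have q2 : Q (N + 4) = 5 := h4
    rw [q1] at e
    rw [q2] at e
    linarith
  have h19 : Q (N + 19) = N + 11 := by
    have p1 : Q (N + 19 - 1) = 11 := by rw [show (N:ℤ) + 19 - 1 = N + 18 by ring]; exact h18
    have p2 : Q (N + 19 - 2) = N + 12 := by rw [show (N:ℤ) + 19 - 2 = N + 17 by ring]; exact h17
    have e := hrec (N + 19) (by linarith) (by rw [p1]; linarith) (by rw [p2]; linarith)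
    rw [p1, p2] at e
    rw [show (N:ℤ) + 19 - (11) = N + 8 by ring] at e
    rw [show (N:ℤ) + 19 - (N + 12) = 7 by ring] at e
    have q1 : Q (N + 8) = N + 4 := h8
    have q2 : Q (7) = 7 := hinit 7 (by norm_num) (by linarith)
    rw [q1] at e
    rw [q2] at e
    linarith
  have h20 : Q (N + 20) = N + 15 := by
    have p1 : Q (N + 20 - 1) = N + 11 := by rw [show (N:ℤ) + 20 - 1 = N + 19 by ring]; exact h19
    have p2 : Q (N + 20 - 2) = 11 := by rw [show (N:ℤ) + 20 - 2 = N + 18 by ring]; exact h18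
    have e := hrec (N + 20) (by linarith) (by rw [p1]; linarith) (by rw [p2]; linarith)
    rw [p1, p2] at e
    rw [show (N:ℤ) + 20 - (N + 11) = 9 by ring] at e
    rw [show (N:ℤ) + 20 - (11) = N + 9 by ring] at e
    have q1 : Q (9) = 9 := hinit 9 (by norm_num) (by linarith)
    have q2 : Q (N + 9) = N + 6 := h9
    rw [q1] at e
    rw [q2] at e
    linarith
  have h21 : Q (N + 21) = 16 := by
    have p1 : Q (N + 21 - 1) = N + 15 := by rw [show (N:ℤ) + 21 - 1 = N + 20 by ring]; exact h20
    have p2 : Q (N + 21 - 2) = N + 11 := by rw [show (N:ℤ) + 21 - 2 = N + 19 by ring]; exact h19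
    have e := hrec (N + 21) (by linarith) (by rw [p1]; linarith) (by rw [p2]; linarith)
    rw [p1, p2] at e
    rw [show (N:ℤ) + 21 - (N + 15) = 6 by ring] at e
    rw [show (N:ℤ) + 21 - (N + 11) = 10 by ring] at e
    have q1 : Q (6) = 6 := hinit 6 (by norm_num) (by linarith)
    have q2 : Q (10) = 10 := hinit 10 (by norm_num) (by linarith)
    rw [q1] at e
    rw [q2] at e
    linarith
  have h22 : Q (N + 22) = 13 := by
    have p1 : Q (N + 22 - 1) = 16 := by rw [show (N:ℤ) + 22 - 1 = N + 21 by ring]; exact h21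
    have p2 : Q (N + 22 - 2) = N + 15 := by rw [show (N:ℤ) + 22 - 2 = N + 20 by ring]; exact h20
    have e := hrec (N + 22) (by linarith) (by rw [p1]; linarith) (by rw [p2]; linarith)
    rw [p1, p2] at e
    rw [show (N:ℤ) + 22 - (16) = N + 6 by ring] at e
    rw [show (N:ℤ) + 22 - (N + 15) = 7 by ring] at e
    have q1 : Q (N + 6) = 6 := h6
    have q2 : Q (7) = 7 := hinit 7 (by norm_num) (by linarith)
    rw [q1] at e
    rw [q2] at e
    linarith
  have h23 : Q (N + 23) = 17 := by
    have p1 : Q (N + 23 - 1) = 13 := by rw [show (N:ℤ) + 23 - 1 = N + 22 by ring]; exact h22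
    have p2 : Q (N + 23 - 2) = 16 := by rw [show (N:ℤ) + 23 - 2 = N + 21 by ring]; exact h21
    have e := hrec (N + 23) (by linarith) (by rw [p1]; linarith) (by rw [p2]; linarith)
    rw [p1, p2] at e
    rw [show (N:ℤ) + 23 - (13) = N + 10 by ring] at e
    rw [show (N:ℤ) + 23 - (16) = N + 7 by ring] at e
    have q1 : Q (N + 10) = 10 := h10
    have q2 : Q (N + 7) = 7 := h7
    rw [q1] at e
    rw [q2] at e
    linarith
  have h24 : Q (N + 24) = 15 := by
    have p1 : Q (N + 24 - 1) = 17 := by rw [show (N:ℤ) + 24 - 1 = N + 23 by ring]; exact h23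
    have p2 : Q (N + 24 - 2) = 13 := by rw [show (N:ℤ) + 24 - 2 = N + 22 by ring]; exact h22
    have e := hrec (N + 24) (by linarith) (by rw [p1]; linarith) (by rw [p2]; linarith)
    rw [p1, p2] at e
    rw [show (N:ℤ) + 24 - (17) = N + 7 by ring] at e
    rw [show (N:ℤ) + 24 - (13) = N + 11 by ring] at e
    have q1 : Q (N + 7) = 7 := h7
    have q2 : Q (N + 11) = 8 := h11
    rw [q1] at e
    rw [q2] at e
    linarith
  have h25 : Q (N + 25) = N + 14 := by
    have p1 : Q (N + 25 - 1) = 15 := by rw [show (N:ℤ) + 25 - 1 = N + 24 by ring]; exact h24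
    have p2 : Q (N + 25 - 2) = 17 := by rw [show (N:ℤ) + 25 - 2 = N + 23 by ring]; exact h23
    have e := hrec (N + 25) (by linarith) (by rw [p1]; linarith) (by rw [p2]; linarith)
    rw [p1, p2] at e
    rw [show (N:ℤ) + 25 - (15) = N + 10 by ring] at e
    rw [show (N:ℤ) + 25 - (17) = N + 8 by ring] at e
    have q1 : Q (N + 10) = 10 := h10
    have q2 : Q (N + 8) = N + 4 := h8
    rw [q1] at e
    rw [q2] at e
    linarith
  have h26 : Q (N + 26) = 20 := by
    have p1 : Q (N + 26 - 1) = N + 14 := by rw [show (N:ℤ) + 26 - 1 = N + 25 by ring]; exact h25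
    have p2 : Q (N + 26 - 2) = 15 := by rw [show (N:ℤ) + 26 - 2 = N + 24 by ring]; exact h24
    have e := hrec (N + 26) (by linarith) (by rw [p1]; linarith) (by rw [p2]; linarith)
    rw [p1, p2] at e
    rw [show (N:ℤ) + 26 - (N + 14) = 12 by ring] at e
    rw [show (N:ℤ) + 26 - (15) = N + 11 by ring] at e
    have q1 : Q (12) = 12 := hinit 12 (by norm_num) (by linarith)
    have q2 : Q (N + 11) = 8 := h11
    rw [q1] at e
    rw [q2] at e
    linarith
  have h27 : Q (N + 27) = 20 := by
    have p1 : Q (N + 27 - 1) = 20 := by rw [show (N:ℤ) + 27 - 1 = N + 26 by ring]; exact h26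
    have p2 : Q (N + 27 - 2) = N + 14 := by rw [show (N:ℤ) + 27 - 2 = N + 25 by ring]; exact h25
    have e := hrec (N + 27) (by linarith) (by rw [p1]; linarith) (by rw [p2]; linarith)
    rw [p1, p2] at e
    rw [show (N:ℤ) + 27 - (20) = N + 7 by ring] at e
    rw [show (N:ℤ) + 27 - (N + 14) = 13 by ring] at e
    have q1 : Q (N + 7) = 7 := h7
    have q2 : Q (13) = 13 := hinit 13 (by norm_num) (by linarith)
    rw [q1] at e
    rw [q2] at e
    linarith
  have h28 : Q (N + 28) = 2 * N + 8 := by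
    have p1 : Q (N + 28 - 1) = 20 := by rw [show (N:ℤ) + 28 - 1 = N + 27 by ring]; exact h27
    have p2 : Q (N + 28 - 2) = 20 := by rw [show (N:ℤ) + 28 - 2 = N + 26 by ring]; exact h26
    have e := hrec (N + 28) (by linarith) (by rw [p1]; linarith) (by rw [p2]; linarith)
    rw [p1, p2] at e
    rw [show (N:ℤ) + 28 - (20) = N + 8 by ring] at e
    have q1 : Q (N + 8) = N + 4 := h8
    have q2 : Q (N + 8) = N + 4 := h8
    rw [q1] at e
    linarith
  have h29 : Q (N + 29) = 27 := by
    have p1 : Q (N + 29 - 1) = 2 * N + 8 := by rw [show (N:ℤ) + 29 - 1 = N + 28 by ring]; exact h28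
    have p2 : Q (N + 29 - 2) = 20 := by rw [show (N:ℤ) + 29 - 2 = N + 27 by ring]; exact h27
    have e := hrec (N + 29) (by linarith) (by rw [p1]; linarith) (by rw [p2]; linarith)
    rw [p1, p2] at e
    rw [show (N:ℤ) + 29 - (2 * N + 8) = -1 * N + 21 by ring] at e
    rw [show (N:ℤ) + 29 - (20) = N + 9 by ring] at e
    have q1 : Q (-1 * N + 21) = -1 * N + 21 := hinit _ (by linarith) (by linarith)
    have q2 : Q (N + 9) = N + 6 := h9
    rw [q1] at e
    rw [q2] at e
    linarith
  have h30 : Q (N + 30) = 24 := by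
    have p1 : Q (N + 30 - 1) = 27 := by rw [show (N:ℤ) + 30 - 1 = N + 29 by ring]; exact h29
    have p2 : Q (N + 30 - 2) = 2 * N + 8 := by rw [show (N:ℤ) + 30 - 2 = N + 28 by ring]; exact h28
    have e := hrec (N + 30) (by linarith) (by rw [p1]; linarith) (by rw [p2]; linarith)
    rw [p1, p2] at e
    rw [show (N:ℤ) + 30 - (27) = N + 3 by ring] at e
    rw [show (N:ℤ) + 30 - (2 * N + 8) = -1 * N + 22 by ring] at e
    have q1 : Q (N + 3) = N + 2 := h3
    have q2 : Q (-1 * N + 22) = -1 * N + 22 := hinit _ (by linarith) (by linarith)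
    rw [q1] at e
    rw [q2] at e
    linarith
  have h31 : Q (N + 31) = 12 := by
    have p1 : Q (N + 31 - 1) = 24 := by rw [show (N:ℤ) + 31 - 1 = N + 30 by ring]; exact h30
    have p2 : Q (N + 31 - 2) = 27 := by rw [show (N:ℤ) + 31 - 2 = N + 29 by ring]; exact h29
    have e := hrec (N + 31) (by linarith) (by rw [p1]; linarith) (by rw [p2]; linarith)
    rw [p1, p2] at e
    rw [show (N:ℤ) + 31 - (24) = N + 7 by ring] at e
    rw [show (N:ℤ) + 31 - (27) = N + 4 by ring] at e
    have q1 : Q (N + 7) = 7 := h7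
    have q2 : Q (N + 4) = 5 := h4
    rw [q1] at e
    rw [q2] at e
    linarith
  have h32 : Q (N + 32) = 2 * N + 19 := by
    have p1 : Q (N + 32 - 1) = 12 := by rw [show (N:ℤ) + 32 - 1 = N + 31 by ring]; exact h31
    have p2 : Q (N + 32 - 2) = 24 := by rw [show (N:ℤ) + 32 - 2 = N + 30 by ring]; exact h30
    have e := hrec (N + 32) (by linarith) (by rw [p1]; linarith) (by rw [p2]; linarith)
    rw [p1, p2] at e
    rw [show (N:ℤ) + 32 - (12) = N + 20 by ring] at e
    rw [show (N:ℤ) + 32 - (24) = N + 8 by ring] at e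
    have q1 : Q (N + 20) = N + 15 := h20
    have q2 : Q (N + 8) = N + 4 := h8
    rw [q1] at e
    rw [q2] at e
    linarith
  refine ⟨h29, h30, h31, h32, ?_⟩
  rw [h32]; linarith
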